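/- Let r be an irreflexive and transitive relation on a set S, let n ≥ 2, and let A, B : Fin n → S (with indices modulo n). Assume that for every i ∈ {0,…,n−2}: (i) if r (A i) (A (i+1)) then r (B i) (B (i+1)), and (ii) if r (B i) (B (i+1)) then r (A (i+1)) (A (i+2 mod n)). If r (A 0) (A 1), then we obtain a contradiction. -/

import Mathlib

open Fin.NatCast Fin.CommRing

theorem stmt_1 {S : Type*} (r : S → S → Prop)
    (hirr : Irreflexive r) (htrans : Transitive r)
    (n : ℕ) (hn : 2 ≤ n) [NeZero n] (A B : Fin n → S)
    (h1 : ∀ i : Fin n, i.val ≤ n - 2 → r (A i) (A (i + 1)) → r (B i) (B (i + 1)))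
    (h2 : ∀ i : Fin n, i.val ≤ n - 2 → r (B i) (B (i + 1)) → r (A (i + 1)) (A (i + 2)))
    (h0 : r (A 0) (A 1)) : False := by
  have step : ∀ k : ℕ, k ≤ n - 2 → r (A (k : Fin n)) (A ((k : Fin n) + 1)) →
      r (A ((k : Fin n) + 1)) (A ((k : Fin n) + 2)) := by
    intro k hk hA
    have hval : ((k : Fin n)).val = k := Fin.val_cast_of_lt (by omega)
    exact h2 (k : Fin n) (by rw [hval]; exact hk) (h1 (k : Fin n) (by rw [hval]; exact hk) hA)
  have key : ∀ k : ℕ, k ≤ n - 2 →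
      r (A (k : Fin n)) (A ((k + 1 : ℕ) : Fin n)) ∧ r (A 0) (A ((k + 1 : ℕ) : Fin n)) := by
    intro k
    induction k with
    | zero =>
      intro _
      constructor <;> simpa using h0
    | succ k ih =>
      intro hk
      obtain ⟨hA, h0A⟩ := ih (by omega)
      have hA' : r (A ((k : Fin n) + 1)) (A ((k : Fin n) + 2)) := by
        apply step k (by omega)
        have : ((k + 1 : ℕ) : Fin n) = (k : Fin n) + 1 := by push_cast; ring
        rwa [this] at hA
      have hcast : ((k + 1 + 1 : ℕ) : Fin n) = (k : Fin n) + 2 := by push_cast; ring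
      have hcast1 : ((k + 1 : ℕ) : Fin n) = (k : Fin n) + 1 := by push_cast; ring
      rw [hcast, hcast1]
      rw [hcast1] at h0A
      exact ⟨hA', htrans h0A hA'⟩
  obtain ⟨hA, h0A⟩ := key (n - 2) le_rfl
  have hlast : r (A (((n - 2 : ℕ) : Fin n) + 1)) (A (((n - 2 : ℕ) : Fin n) + 2)) := by
    apply step (n - 2) le_rfl
    have : ((n - 2 + 1 : ℕ) : Fin n) = ((n - 2 : ℕ) : Fin n) + 1 := by push_cast; ring
    rwa [this] at hA
  have e1 : ((n - 2 + 1 : ℕ) : Fin n) = ((n - 2 : ℕ) : Fin n) + 1 := by push_cast; ring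
  have e2 : ((n - 2 : ℕ) : Fin n) + 2 = (0 : Fin n) := by
    have : ((n - 2 : ℕ) : Fin n) + 2 = ((n - 2 + 2 : ℕ) : Fin n) := by push_cast; ring
    rw [this]
    have : n - 2 + 2 = n := by omega
    rw [this]
    exact Fin.natCast_self n
  rw [e2] at hlast
  rw [e1] at h0A
  exact hirr _ (htrans h0A hlast)
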